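/- With the notation of the previous statement, define ζ_e = −K_p · vee(P((C_e⁻¹)ᵀ E Cᵀ)) where P is the trace-orthogonal projection onto se(3), vee: se(3) → ℝ⁶ the inverse of [·], and K_p a positive-definite diagonal 6×6 matrix. Then along Ċ = [ζ_e]C, the Lyapunov function V = (1/2)‖E‖_F² satisfies V̇ = −vee(P((C_e⁻¹)ᵀ E Cᵀ))ᵀ · L · K_p · vee(P((C_e⁻¹)ᵀ E Cᵀ)) ≤ 0, where L = diag(2,2,2,1,1,1); in particular V̇ < 0 whenever P((C_e⁻¹)ᵀ E Cᵀ) ≠ 0. -/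

import Mathlib

open Matrix

/-- The skew-symmetric matrix of `ω ∈ ℝ³`. -/
def skew3 (ω : Fin 3 → ℝ) : Matrix (Fin 3) (Fin 3) ℝ :=
  !![0, -ω 2, ω 1; ω 2, 0, -ω 0; -ω 1, ω 0, 0]

/-- The 4×4 matrix `[ζ]` of a twist `ζ ∈ ℝ⁶` (angular part first). -/
def hat6 (ζ : Fin 6 → ℝ) : Matrix (Fin 3 ⊕ Fin 1) (Fin 3 ⊕ Fin 1) ℝ :=
  Matrix.fromBlocks (skew3 ![ζ 0, ζ 1, ζ 2]) (Matrix.of fun i _ => ![ζ 3, ζ 4, ζ 5] i) 0 0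

/-- The trace-orthogonal projection of a 4×4 matrix onto `se(3)`. -/
noncomputable def Pse3 (A : Matrix (Fin 3 ⊕ Fin 1) (Fin 3 ⊕ Fin 1) ℝ) :
    Matrix (Fin 3 ⊕ Fin 1) (Fin 3 ⊕ Fin 1) ℝ :=
  Matrix.fromBlocks ((1 / 2 : ℝ) • (A.toBlocks₁₁ - A.toBlocks₁₁.transpose))
    A.toBlocks₁₂ 0 0

/-- The `vee` map extracting the 6-vector of an `se(3)`-form matrix. -/
def vee6 (A : Matrix (Fin 3 ⊕ Fin 1) (Fin 3 ⊕ Fin 1) ℝ) : Fin 6 → ℝ :=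
  ![A (Sum.inl 2) (Sum.inl 1), A (Sum.inl 0) (Sum.inl 2), A (Sum.inl 1) (Sum.inl 0),
    A (Sum.inl 0) (Sum.inr 0), A (Sum.inl 1) (Sum.inr 0), A (Sum.inl 2) (Sum.inr 0)]

lemma cons_five {α : Type*} (a b c d e f : α) : (![a,b,c,d,e,f] : Fin 6 → α) 5 = f := rfl

set_option maxHeartbeats 4000000 in
lemma key (M E C : Matrix (Fin 3 ⊕ Fin 1) (Fin 3 ⊕ Fin 1) ℝ) (ζ : Fin 6 → ℝ) :
    ∑ i, ∑ j, E i j * (M * (hat6 ζ * C)) i j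
      = ζ ⬝ᵥ (Matrix.diagonal (![2,2,2,1,1,1] : Fin 6 → ℝ) *ᵥ
          vee6 (Pse3 (M.transpose * E * C.transpose))) := by
  simp [Matrix.mul_apply, Matrix.mulVec, dotProduct, hat6, skew3, Pse3, vee6,
    Matrix.diagonal, Fintype.sum_sum_type, Fin.sum_univ_three, Fin.sum_univ_six,
    Fin.sum_univ_one, Matrix.toBlocks₁₁,
    Matrix.toBlocks₁₂, Matrix.fromBlocks, Matrix.transpose_apply, Matrix.cons_val_zero,
    Matrix.cons_val_one, Matrix.head_cons, Matrix.cons_val_two, Matrix.cons_val_three,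
    Matrix.cons_val_four, Matrix.vecTail, Matrix.vecHead, Function.comp, cons_five]
  ring

lemma Pse3_eq_zero (A : Matrix (Fin 3 ⊕ Fin 1) (Fin 3 ⊕ Fin 1) ℝ)
    (h : vee6 (Pse3 A) = 0) : Pse3 A = 0 := by
  have h0 := congrFun h 0
  have h1 := congrFun h 1
  have h2 := congrFun h 2
  have h3 := congrFun h 3
  have h4 := congrFun h 4
  have h5 := congrFun h 5
  simp [vee6, cons_five] at h0 h1 h2 h3 h4 h5
  ext i j
  rcases i with i | i <;> rcases j with j | j <;> fin_cases i <;> fin_cases j <;>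
    simp_all [Pse3, Matrix.fromBlocks, Matrix.toBlocks₁₁, Matrix.toBlocks₁₂] <;> linarith


/-- the kinematic stabilization law
`ζ_e = −K_p vee(P((C_e⁻¹)ᵀ E Cᵀ))` makes `V = (1/2)‖E‖_F²` decrease:
`V̇ = −vee(...)ᵀ L K_p vee(...) ≤ 0`, with strict decrease when the projection
is nonzero. Here `L = diag(2,2,2,1,1,1)`. -/
theorem se3_kinematic_stabilization
    (C : ℝ → Matrix (Fin 3 ⊕ Fin 1) (Fin 3 ⊕ Fin 1) ℝ)
    (Ce : Matrix (Fin 3 ⊕ Fin 1) (Fin 3 ⊕ Fin 1) ℝ)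
    (Re : Matrix (Fin 3) (Fin 3) ℝ) (pe : Fin 3 → ℝ)
    (hCe : Ce = Matrix.fromBlocks Re (Matrix.of fun i _ => pe i) 0 1)
    (hRe : Re.transpose * Re = 1) (hdet : Re.det = 1)
    (Kp : Matrix (Fin 6) (Fin 6) ℝ) (d : Fin 6 → ℝ)
    (hKp : Kp = Matrix.diagonal d) (hd : ∀ i, 0 < d i)
    (E : ℝ → Matrix (Fin 3 ⊕ Fin 1) (Fin 3 ⊕ Fin 1) ℝ)
    (hE : ∀ t, E t = Ce⁻¹ * C t - 1)
    (ζe : ℝ → Fin 6 → ℝ)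
    (hζe : ∀ t, ζe t =
      -(Kp *ᵥ vee6 (Pse3 ((Ce⁻¹).transpose * E t * (C t).transpose))))
    (hC : ∀ t i j, HasDerivAt (fun s => C s i j) ((hat6 (ζe t) * C t) i j) t) :
    ∀ t,
      HasDerivAt (fun s => (1 / 2 : ℝ) * ∑ i, ∑ j, (E s i j) ^ 2)
        (-(vee6 (Pse3 ((Ce⁻¹).transpose * E t * (C t).transpose)) ⬝ᵥ
          ((Matrix.diagonal ![2, 2, 2, 1, 1, 1] * Kp) *ᵥ
            vee6 (Pse3 ((Ce⁻¹).transpose * E t * (C t).transpose))))) t ∧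
      -(vee6 (Pse3 ((Ce⁻¹).transpose * E t * (C t).transpose)) ⬝ᵥ
          ((Matrix.diagonal ![2, 2, 2, 1, 1, 1] * Kp) *ᵥ
            vee6 (Pse3 ((Ce⁻¹).transpose * E t * (C t).transpose)))) ≤ 0 ∧
      (Pse3 ((Ce⁻¹).transpose * E t * (C t).transpose) ≠ 0 →
        -(vee6 (Pse3 ((Ce⁻¹).transpose * E t * (C t).transpose)) ⬝ᵥ
          ((Matrix.diagonal ![2, 2, 2, 1, 1, 1] * Kp) *ᵥ
            vee6 (Pse3 ((Ce⁻¹).transpose * E t * (C t).transpose)))) < 0) := by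
  intro t
  set v := vee6 (Pse3 ((Ce⁻¹).transpose * E t * (C t).transpose)) with hv
  set L : Fin 6 → ℝ := ![2, 2, 2, 1, 1, 1] with hL
  -- derivative of each entry of E
  have hE' : ∀ i j, HasDerivAt (fun s => E s i j)
      ((Ce⁻¹ * (hat6 (ζe t) * C t)) i j) t := by
    intro i j
    have heq : (fun s => E s i j)
        = fun s => (∑ k, Ce⁻¹ i k * C s k j) - (1 : Matrix (Fin 3 ⊕ Fin 1) (Fin 3 ⊕ Fin 1) ℝ) i j := by
      funext s; rw [hE s]; simp [Matrix.sub_apply, Matrix.mul_apply]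
    rw [heq, Matrix.mul_apply]
    exact (HasDerivAt.fun_sum fun k _ => (hC t k j).const_mul (Ce⁻¹ i k)).sub_const _
  -- derivative of V
  have hV : HasDerivAt (fun s => (1 / 2 : ℝ) * ∑ i, ∑ j, (E s i j) ^ 2)
      ((1 / 2 : ℝ) * ∑ i, ∑ j,
        ((2 : ℕ) : ℝ) * (E t i j) ^ 1 * ((Ce⁻¹ * (hat6 (ζe t) * C t)) i j)) t := by
    exact HasDerivAt.const_mul _ <| HasDerivAt.fun_sum fun i _ =>
      HasDerivAt.fun_sum fun j _ => (hE' i j).fun_pow 2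
  -- value of the derivative
  have hval : ((1 / 2 : ℝ) * ∑ i, ∑ j,
        ((2 : ℕ) : ℝ) * (E t i j) ^ 1 * ((Ce⁻¹ * (hat6 (ζe t) * C t)) i j))
      = -(v ⬝ᵥ ((Matrix.diagonal L * Kp) *ᵥ v)) := by
    have h1 : ((1 / 2 : ℝ) * ∑ i, ∑ j,
        ((2 : ℕ) : ℝ) * (E t i j) ^ 1 * ((Ce⁻¹ * (hat6 (ζe t) * C t)) i j))
        = ∑ i, ∑ j, E t i j * (Ce⁻¹ * (hat6 (ζe t) * C t)) i j := by
      rw [Finset.mul_sum]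
      refine Finset.sum_congr rfl fun i _ => ?_
      rw [Finset.mul_sum]
      exact Finset.sum_congr rfl fun j _ => by push_cast; ring
    rw [h1, key, hζe t, ← hv, hKp, Matrix.diagonal_mul_diagonal]
    simp only [dotProduct, Matrix.mulVec_diagonal, Pi.neg_apply, neg_mul, Finset.sum_neg_distrib]
    rw [neg_inj]
    exact Finset.sum_congr rfl fun i _ => by ring
  have hnonneg : 0 ≤ v ⬝ᵥ ((Matrix.diagonal L * Kp) *ᵥ v) := by
    rw [hKp, Matrix.diagonal_mul_diagonal]
    simp only [dotProduct, Matrix.mulVec_diagonal]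
    refine Finset.sum_nonneg fun i _ => ?_
    have hLi : 0 < L i := by fin_cases i <;> norm_num [hL]
    nlinarith [mul_nonneg (mul_pos hLi (hd i)).le (mul_self_nonneg (v i))]
  refine ⟨hval ▸ hV, neg_nonpos_of_nonneg hnonneg, fun hP => ?_⟩
  have hvne : v ≠ 0 := fun h => hP (Pse3_eq_zero _ (hv ▸ h))
  obtain ⟨i, hi⟩ := Function.ne_iff.mp hvne
  have hpos : 0 < v ⬝ᵥ ((Matrix.diagonal L * Kp) *ᵥ v) := by
    rw [hKp, Matrix.diagonal_mul_diagonal]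
    simp only [dotProduct, Matrix.mulVec_diagonal]
    refine Finset.sum_pos' (fun j _ => ?_) ⟨i, Finset.mem_univ i, ?_⟩
    · have hLj : 0 < L j := by fin_cases j <;> norm_num [hL]
      nlinarith [mul_nonneg (mul_pos hLj (hd j)).le (mul_self_nonneg (v j))]
    · have hLi : 0 < L i := by fin_cases i <;> norm_num [hL]
      nlinarith [mul_pos (mul_pos hLi (hd i)) (mul_self_pos.mpr hi)]
  linarith
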